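/- Let s(ρ,e) be a C¹ function on {ρ > 0, e > 0} satisfying the first-order PDE ∂s/∂ρ(ρ,e) = -(γ-1)(e/ρ) ∂s/∂e(ρ,e) with γ > 1. Then there exists a function S of one variable such that s(ρ,e) = S((γ-1) e / ρ^{γ-1}) for all ρ > 0, e > 0. -/

import Mathlib

/-- a C¹ solution of `∂_ρ s = -(γ-1)(e/ρ) ∂_e s` on `{ρ>0, e>0}` factors
through the quantity `(γ-1) e / ρ^(γ-1)`. -/
theorem entropy_factors (γ : ℝ) (hγ : 1 < γ) (s : ℝ × ℝ → ℝ)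
    (hs : ContDiffOn ℝ 1 s (Set.Ioi (0 : ℝ) ×ˢ Set.Ioi (0 : ℝ)))
    (hpde : ∀ ρ e : ℝ, 0 < ρ → 0 < e →
      fderiv ℝ s (ρ, e) (1, 0) = -(γ - 1) * (e / ρ) * fderiv ℝ s (ρ, e) (0, 1)) :
    ∃ S : ℝ → ℝ, ∀ ρ e : ℝ, 0 < ρ → 0 < e →
      s (ρ, e) = S ((γ - 1) * e / ρ ^ (γ - 1)) := by
  have hopen : IsOpen ((Set.Ioi (0 : ℝ)) ×ˢ Set.Ioi (0 : ℝ)) :=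
    isOpen_Ioi.prod isOpen_Ioi
  have hdiff : ∀ p ∈ (Set.Ioi (0 : ℝ)) ×ˢ Set.Ioi (0 : ℝ), DifferentiableAt ℝ s p := by
    intro p hp
    exact ((hs.differentiableOn one_ne_zero).differentiableAt (hopen.mem_nhds hp))
  have hγ0 : γ - 1 ≠ 0 := by linarith
  -- key: for c > 0, t ↦ s (t, c * t^(γ-1)) is constant on Ioi 0
  have key : ∀ c : ℝ, 0 < c → ∀ x ∈ Set.Ioi (0:ℝ), ∀ y ∈ Set.Ioi (0:ℝ),
      s (x, c * x ^ (γ - 1)) = s (y, c * y ^ (γ - 1)) := by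
    intro c hc
    set g : ℝ → ℝ := fun t => s (t, c * t ^ (γ - 1)) with hg
    have hder : ∀ t ∈ Set.Ioi (0:ℝ), HasDerivAt g 0 t := by
      intro t ht
      have ht : (0:ℝ) < t := ht
      have hmem : (t, c * t ^ (γ - 1)) ∈ (Set.Ioi (0 : ℝ)) ×ˢ Set.Ioi (0 : ℝ) := by
        constructor
        · exact ht
        · exact mul_pos hc (Real.rpow_pos_of_pos ht _)
      have hcurve : HasDerivAt (fun u : ℝ => (u, c * u ^ (γ - 1)))
          ((1 : ℝ), c * ((γ - 1) * t ^ (γ - 1 - 1))) t := by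
        exact (hasDerivAt_id t).prodMk
          (((Real.hasDerivAt_rpow_const (Or.inl ht.ne'))).const_mul c)
      have hsd := hdiff _ hmem
      have hcomp := hsd.hasFDerivAt.comp_hasDerivAt t hcurve
      have hexp : fderiv ℝ s (t, c * t ^ (γ - 1))
          ((1 : ℝ), c * ((γ - 1) * t ^ (γ - 1 - 1))) = 0 := by
        have hsplit : ((1 : ℝ), c * ((γ - 1) * t ^ (γ - 1 - 1)))
            = ((1:ℝ), (0:ℝ)) + (c * ((γ - 1) * t ^ (γ - 1 - 1))) • ((0:ℝ), (1:ℝ)) := by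
          simp [Prod.ext_iff]
        rw [hsplit, map_add, map_smul, hpde t _ ht (mul_pos hc (Real.rpow_pos_of_pos ht _))]
        have hpow : t ^ (γ - 1 - 1) = t ^ (γ - 1) / t := by
          rw [Real.rpow_sub ht, Real.rpow_one]
        rw [hpow, smul_eq_mul]
        field_simp
        ring
      rw [hexp] at hcomp
      exact hcomp
    intro x hx y hy
    have hdo : DifferentiableOn ℝ g (Set.Ioi (0:ℝ)) := fun t ht =>
      ((hder t ht).differentiableAt).differentiableWithinAt
    have hfd : ∀ t ∈ Set.Ioi (0:ℝ), fderivWithin ℝ g (Set.Ioi (0:ℝ)) t = 0 := by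
      intro t ht
      rw [fderivWithin_of_isOpen isOpen_Ioi ht]
      have := (hder t ht).hasFDerivAt.fderiv
      rw [this]
      ext
      simp
    exact (convex_Ioi (0:ℝ)).is_const_of_fderivWithin_eq_zero hdo hfd hx hy
  refine ⟨fun y => s (1, y / (γ - 1)), ?_⟩
  intro ρ e hρ he
  have hc : 0 < e / ρ ^ (γ - 1) := div_pos he (Real.rpow_pos_of_pos hρ _)
  have h1 := key (e / ρ ^ (γ - 1)) hc ρ hρ 1 (by norm_num)
  have he' : e / ρ ^ (γ - 1) * ρ ^ (γ - 1) = e := by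
    field_simp
  rw [he'] at h1
  rw [h1]
  congr 1
  rw [Real.one_rpow, mul_one]
  field_simp
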